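/- The function F₂ : ℝ³ → ℝ defined by F₂(s,λ,r) = −(1/16)·sinh(4s)·e^{−8λ} − (1/4)·(16r − s)·e^{8λ} satisfies the partial differential equation ∂³F₂/∂s²∂r + 16·∂³F₂/∂s³ − 16·∂F₂/∂r − 256·∂F₂/∂s = 0 at every point of ℝ³. -/

import Mathlib

/-- The generating function of the genus-2 Donaldson invariants of Σ₂ × ℙ¹:
    F₂(s,λ,r) = −(1/16)·sinh(4s)·e^{−8λ} − (1/4)·(16r − s)·e^{8λ}. -/
noncomputable def F₂ (s l r : ℝ) : ℝ :=
  -(1 / 16) * Real.sinh (4 * s) * Real.exp (-8 * l)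
    - (1 / 4) * (16 * r - s) * Real.exp (8 * l)

open Real in
lemma F₂_deriv_r (s l r : ℝ) :
    deriv (fun r' => F₂ s l r') r = -4 * Real.exp (8 * l) := by
  have h : HasDerivAt (fun r' => F₂ s l r') (-4 * Real.exp (8 * l)) r := by
    have h1 : HasDerivAt (fun r' : ℝ => 16 * r' - s) 16 r := by
      simpa using ((hasDerivAt_id r).const_mul (16 : ℝ)).sub_const s
    have h2 := ((h1.const_mul (1/4 : ℝ)).mul_const (Real.exp (8 * l)))
    have h3 := (hasDerivAt_const r (-(1/16) * Real.sinh (4*s) * Real.exp (-8*l))).sub h2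
    exact h3.congr_deriv (by ring)
  exact h.deriv

open Real in
lemma sinh_d (x : ℝ) : HasDerivAt (fun s' => Real.sinh (4 * s')) (4 * Real.cosh (4 * x)) x := by
  have h := (Real.hasDerivAt_sinh (4 * x)).comp x ((hasDerivAt_id x).const_mul 4)
  exact h.congr_deriv (by ring)

open Real in
lemma cosh_d (x : ℝ) : HasDerivAt (fun s' => Real.cosh (4 * s')) (4 * Real.sinh (4 * x)) x := by
  have h := (Real.hasDerivAt_cosh (4 * x)).comp x ((hasDerivAt_id x).const_mul 4)
  exact h.congr_deriv (by ring)

open Real in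
lemma F₂_deriv_s (l r : ℝ) :
    (deriv fun s' => F₂ s' l r)
      = fun s' => -(1/4) * Real.cosh (4 * s') * Real.exp (-8 * l)
          + (1/4) * Real.exp (8 * l) := by
  funext x
  have hA := ((sinh_d x).const_mul (-(1/16) : ℝ)).mul_const (Real.exp (-8 * l))
  have h1 : HasDerivAt (fun s' : ℝ => 16 * r - s') (-1) x := by
    exact ((hasDerivAt_const x (16 * r)).sub (hasDerivAt_id x)).congr_deriv (by ring)
  have hB := (h1.const_mul (1/4 : ℝ)).mul_const (Real.exp (8 * l))
  have h : HasDerivAt (fun s' => F₂ s' l r)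
      (-(1/4) * Real.cosh (4 * x) * Real.exp (-8 * l) + (1/4) * Real.exp (8 * l)) x := by
    exact (hA.sub hB).congr_deriv (by ring)
  exact h.deriv

open Real in
lemma F₂_deriv_ss (l : ℝ) :
    (deriv fun s' => -(1/4) * Real.cosh (4 * s') * Real.exp (-8 * l)
        + (1/4) * Real.exp (8 * l))
      = fun s' => -Real.sinh (4 * s') * Real.exp (-8 * l) := by
  funext x
  have hA := ((cosh_d x).const_mul (-(1/4) : ℝ)).mul_const (Real.exp (-8 * l))
  have h := hA.add_const ((1/4) * Real.exp (8 * l))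
  have h' : HasDerivAt (fun s' => -(1/4) * Real.cosh (4 * s') * Real.exp (-8 * l)
      + (1/4) * Real.exp (8 * l)) (-Real.sinh (4 * x) * Real.exp (-8 * l)) x := by
    exact h.congr_deriv (by ring)
  exact h'.deriv

open Real in
lemma F₂_deriv_sss (l s : ℝ) :
    deriv (fun s' => -Real.sinh (4 * s') * Real.exp (-8 * l)) s
      = -4 * Real.cosh (4 * s) * Real.exp (-8 * l) := by
  have hA := ((sinh_d s).const_mul (-1 : ℝ)).mul_const (Real.exp (-8 * l))
  have h : HasDerivAt (fun s' => -Real.sinh (4 * s') * Real.exp (-8 * l))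
      (-4 * Real.cosh (4 * s) * Real.exp (-8 * l)) s := by
    have e : (fun s' => -Real.sinh (4 * s') * Real.exp (-8 * l))
        = fun y => -1 * Real.sinh (4 * y) * Real.exp (-8 * l) := by funext x; ring
    rw [e]
    exact hA.congr_deriv (by ring)
  exact h.deriv

/-- F₂ satisfies ∂³F₂/∂s²∂r + 16·∂³F₂/∂s³ − 16·∂F₂/∂r − 256·∂F₂/∂s = 0 everywhere
    (the relation (γ + 16α)(α² − 16)). -/
theorem F₂_pde_gamma_add_16alpha_mul_alpha_sq_sub_16 (s l r : ℝ) :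
    iteratedDeriv 2 (fun s' => deriv (fun r' => F₂ s' l r') r) s
      + 16 * iteratedDeriv 3 (fun s' => F₂ s' l r) s
      - 16 * deriv (fun r' => F₂ s l r') r
      - 256 * deriv (fun s' => F₂ s' l r) s = 0 := by
  have hc : (fun s' => deriv (fun r' => F₂ s' l r') r)
      = fun _ => -4 * Real.exp (8 * l) := funext fun x => F₂_deriv_r x l r
  have h2 : iteratedDeriv 2 (fun s' => deriv (fun r' => F₂ s' l r') r) s = 0 := by
    rw [hc]
    simp [iteratedDeriv_succ, iteratedDeriv_zero]
  have h3 : iteratedDeriv 3 (fun s' => F₂ s' l r) s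
      = -4 * Real.cosh (4 * s) * Real.exp (-8 * l) := by
    rw [show iteratedDeriv 3 (fun s' => F₂ s' l r) = iteratedDeriv (2 + 1) (fun s' => F₂ s' l r) from rfl, iteratedDeriv_succ', iteratedDeriv_succ',
      iteratedDeriv_one, F₂_deriv_s, F₂_deriv_ss]
    exact F₂_deriv_sss l s
  rw [h2, h3, F₂_deriv_r, F₂_deriv_s]
  ring
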